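/- Let p > 1 be a real number, let d' ≥ 2, let e_1,…,e_{d'} be the standard basis vectors of ℝ^{d'}, let c = 1/(1 + (d'−1)^{1/(p−1)}), and let r = ((d'−1)c^p + (1−c)^p)^{1/p}. Then: (i) ||e_i − c·(1,…,1)||_p = r for every i ∈ {1,…,d'}; and (ii) for every x ∈ ℝ^{d'}, max_{1 ≤ i ≤ d'} ||e_i − x||_p ≥ r. In other words, the smallest l_p ball enclosing {e_1,…,e_{d'}} is centered at c·∑_{i=1}^{d'} e_i and has radius r. -/

import Mathlib

/-- Tangent line inequality for `rpow`: for `b > 0`, `a ≥ 0`, `p ≥ 1`,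
`b^p + p * b^(p-1) * (a - b) ≤ a^p`. -/
lemma tangent_rpow {p : ℝ} (hp : 1 ≤ p) {b : ℝ} (hb : 0 < b) {a : ℝ} (ha : 0 ≤ a) :
    b ^ p + p * b ^ (p - 1) * (a - b) ≤ a ^ p := by
  have hs : -1 ≤ a / b - 1 := by
    have : 0 ≤ a / b := div_nonneg ha hb.le
    linarith
  have hB := one_add_mul_self_le_rpow_one_add hs hp
  have h1 : (1 + (a / b - 1)) = a / b := by ring
  rw [h1] at hB
  have hbp : (0:ℝ) < b ^ p := Real.rpow_pos_of_pos hb p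
  have h2 : (1 + p * (a / b - 1)) * b ^ p ≤ (a / b) ^ p * b ^ p :=
    mul_le_mul_of_nonneg_right hB hbp.le
  have h3 : (a / b) ^ p * b ^ p = a ^ p := by
    rw [Real.div_rpow ha hb.le]
    field_simp
  have h4 : b ^ (p - 1) = b ^ p / b := by
    rw [Real.rpow_sub hb, Real.rpow_one]
  rw [h3] at h2
  calc b ^ p + p * b ^ (p - 1) * (a - b)
      = (1 + p * (a / b - 1)) * b ^ p := by
        rw [h4]; field_simp
    _ ≤ a ^ p := h2

lemma sum_ite_const {n : ℕ} (k : Fin n) (A B : ℝ) :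
    ∑ j : Fin n, (if j = k then A else B) = A + ((n : ℝ) - 1) * B := by
  have : ∀ j : Fin n, (if j = k then A else B) = (if j = k then A - B else 0) + B := by
    intro j; by_cases h : j = k <;> simp [h]
  rw [Finset.sum_congr rfl (fun j _ => this j), Finset.sum_add_distrib,
    Finset.sum_ite_eq' Finset.univ k (fun _ => A - B)]
  have hk : k ∈ Finset.univ := Finset.mem_univ k
  simp [hk, Finset.card_univ]
  ring

theorem stmt_3 (p : ℝ) (hp : 1 < p) (d' : ℕ) (hd' : 2 ≤ d') :
    let c : ℝ := 1 / (1 + ((d' : ℝ) - 1) ^ ((1 : ℝ) / (p - 1)))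
    let r : ℝ := (((d' : ℝ) - 1) * c ^ p + (1 - c) ^ p) ^ ((1 : ℝ) / p)
    (∀ i : Fin d',
      (∑ j : Fin d', |(if j = i then (1 : ℝ) else 0) - c| ^ p) ^ ((1 : ℝ) / p) = r) ∧
    ∀ x : Fin d' → ℝ, ∃ i : Fin d',
      r ≤ (∑ j : Fin d', |(if j = i then (1 : ℝ) else 0) - x j| ^ p) ^ ((1 : ℝ) / p) := by
  intro c r
  set D : ℝ := (d' : ℝ) - 1 with hD
  have hD1 : (1:ℝ) ≤ D := by
    have : (2:ℝ) ≤ (d' : ℝ) := by exact_mod_cast hd'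
    simp [hD]; linarith
  have hD0 : (0:ℝ) < D := by linarith
  have hq : 0 < p - 1 := by linarith
  have hE : (0:ℝ) < D ^ ((1:ℝ) / (p - 1)) := Real.rpow_pos_of_pos hD0 _
  have hc_pos : 0 < c := by
    have : (0:ℝ) < 1 + D ^ ((1:ℝ) / (p-1)) := by linarith
    exact div_pos one_pos this
  have hc_lt : c < 1 := by
    rw [div_lt_one (by linarith)]
    linarith
  have h1c : (0:ℝ) < 1 - c := by linarith
  -- key: 1 - c = c * D^(1/(p-1))
  have hkey : 1 - c = c * D ^ ((1:ℝ)/(p-1)) := by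
    have hne : (1 + D ^ ((1:ℝ)/(p-1))) ≠ 0 := by linarith
    show 1 - 1 / (1 + D ^ ((1:ℝ)/(p-1))) = 1 / (1 + D ^ ((1:ℝ)/(p-1))) * D ^ ((1:ℝ)/(p-1))
    rw [div_mul_eq_mul_div, one_mul, eq_div_iff hne, sub_mul, one_div_mul_cancel hne]
    ring
  -- (1-c)^(p-1) = D * c^(p-1)
  have hK : (1 - c) ^ (p - 1) = D * c ^ (p - 1) := by
    rw [hkey, Real.mul_rpow hc_pos.le hE.le, ← Real.rpow_mul hD0.le,
      one_div_mul_cancel (ne_of_gt hq), Real.rpow_one]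
    ring
  set G : ℝ := D * c ^ p + (1 - c) ^ p with hG
  have hGnn : 0 ≤ G := by
    have := Real.rpow_nonneg hc_pos.le p
    have := Real.rpow_nonneg h1c.le p
    positivity
  -- pointwise min: for any t, G ≤ |1 - t|^p + D * |t|^p
  have hmin : ∀ t : ℝ, G ≤ |1 - t| ^ p + D * |t| ^ p := by
    intro t
    have t1 := tangent_rpow hp.le h1c (abs_nonneg (1 - t))
    have t2 := tangent_rpow hp.le hc_pos (abs_nonneg t)
    have t2' : D * (c ^ p + p * c ^ (p-1) * (|t| - c)) ≤ D * |t| ^ p :=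
      mul_le_mul_of_nonneg_left t2 hD0.le
    have htri : 1 ≤ |1 - t| + |t| := by
      have := abs_add_le (1 - t) t
      simp at this
      calc (1:ℝ) = |(1 - t) + t| := by norm_num
        _ ≤ |1 - t| + |t| := abs_add_le _ _
    have hcq : (0:ℝ) < c ^ (p - 1) := Real.rpow_pos_of_pos hc_pos _
    have key : 0 ≤ p * (D * c ^ (p-1)) * (|1 - t| + |t| - 1) := by
      have : (0:ℝ) ≤ |1 - t| + |t| - 1 := by linarith
      have hppos : (0:ℝ) < p := by linarith
      positivity
    rw [hK] at t1
    nlinarith [t1, t2', key]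
  -- Part (i)
  have part1 : ∀ i : Fin d',
      (∑ j : Fin d', |(if j = i then (1 : ℝ) else 0) - c| ^ p) ^ ((1 : ℝ) / p) = r := by
    intro i
    have hterm : ∀ j : Fin d', |(if j = i then (1 : ℝ) else 0) - c| ^ p
        = if j = i then (1 - c) ^ p else c ^ p := by
      intro j
      by_cases h : j = i <;> simp [h, abs_of_pos h1c, abs_of_pos hc_pos]
    rw [Finset.sum_congr rfl (fun j _ => hterm j), sum_ite_const i ((1-c)^p) (c^p)]
    show (_ : ℝ) = (D * c ^ p + (1 - c) ^ p) ^ ((1:ℝ)/p)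
    rw [← hD]
    ring_nf
  refine ⟨part1, ?_⟩
  intro x
  -- sum over i of S i ≥ d' * G
  have hswap : ∑ i : Fin d', ∑ j : Fin d', |(if j = i then (1 : ℝ) else 0) - x j| ^ p
      = ∑ j : Fin d', (|1 - x j| ^ p + D * |x j| ^ p) := by
    rw [Finset.sum_comm]
    refine Finset.sum_congr rfl (fun j _ => ?_)
    have : ∀ i : Fin d', |(if j = i then (1 : ℝ) else 0) - x j| ^ p
        = if i = j then |1 - x j| ^ p else |x j| ^ p := by
      intro i
      rcases eq_or_ne i j with h | h
      · subst h; simp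
      · simp [h, h.symm]
    rw [Finset.sum_congr rfl (fun i _ => this i), sum_ite_const j _ _, ← hD]
  have hlower : (d' : ℝ) * G ≤ ∑ j : Fin d', (|1 - x j| ^ p + D * |x j| ^ p) := by
    calc (d' : ℝ) * G = ∑ _j : Fin d', G := by
          rw [Finset.sum_const, Finset.card_univ, Fintype.card_fin, nsmul_eq_mul]
      _ ≤ _ := Finset.sum_le_sum (fun j _ => hmin (x j))
  have hconst : ∑ _i : Fin d', G = (d' : ℝ) * G := by
    rw [Finset.sum_const, Finset.card_univ, Fintype.card_fin, nsmul_eq_mul]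
  have hexists : ∃ i : Fin d',
      G ≤ ∑ j : Fin d', |(if j = i then (1 : ℝ) else 0) - x j| ^ p := by
    by_contra hcon
    push_neg at hcon
    have : ∑ i : Fin d', ∑ j : Fin d', |(if j = i then (1 : ℝ) else 0) - x j| ^ p
        < ∑ _i : Fin d', G :=
      Finset.sum_lt_sum_of_nonempty ⟨⟨0, by omega⟩, Finset.mem_univ _⟩ (fun i _ => hcon i)
    rw [hconst, hswap] at this
    linarith
  obtain ⟨i, hi⟩ := hexists
  refine ⟨i, ?_⟩
  have : r = G ^ ((1:ℝ)/p) := by rw [hG, hD]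
  rw [this]
  exact Real.rpow_le_rpow hGnn hi (by positivity)
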